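/- For every n divisible by σ, the word w = (a₁a₂⋯a_σ)^{n/σ} over an alphabet of σ letters has Abelian period (h,p) for every p with p ≡ 0 (mod σ), p ≤ n, and every h with 0 ≤ h ≤ min(p-1, n-p). Consequently w has Θ(n²) distinct Abelian periods. -/

import Mathlib

/-- A word `w` has Abelian period `(h, p)` if `w = u₀u₁⋯u_{k-1}u_k` where `|u₀| = h`,
all the middle blocks `u₁, …, u_{k-1}` have length `p` and the same Parikh vector,
the Parikh vectors of the head `u₀` and the tail `u_k` are contained in that common
Parikh vector, `h < p`, there is at least one middle block, and the tail has length
`< p`. -/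
def HasAbelianPeriod {α : Type*} [DecidableEq α] (w : List α) (h p : ℕ) : Prop :=
  h < p ∧ ∃ (u0 : List α) (us : List (List α)) (uk : List α),
    w = u0 ++ us.flatten ++ uk ∧
    u0.length = h ∧
    us ≠ [] ∧
    (∀ u ∈ us, u.length = p) ∧
    (∀ u ∈ us, ∀ v ∈ us, ∀ a : α, u.count a = v.count a) ∧
    (∀ u ∈ us, ∀ a : α, u0.count a ≤ u.count a) ∧
    (∀ u ∈ us, ∀ a : α, uk.count a ≤ u.count a) ∧
    uk.length < p


namespace AbPer

def ablock (σ : ℕ) : List (Fin σ) := List.ofFn (fun i => i)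

def aword (σ m : ℕ) : List (Fin σ) := (List.replicate m (ablock σ)).flatten

lemma length_ablock (σ : ℕ) : (ablock σ).length = σ := by simp [ablock]

lemma count_ablock {σ : ℕ} (a : Fin σ) : (ablock σ).count a = 1 :=
  List.count_eq_one_of_mem (List.nodup_ofFn.mpr fun _ _ h => h)
    (List.mem_ofFn.mpr ⟨a, rfl⟩)

lemma length_aword (σ m : ℕ) : (aword σ m).length = m * σ := by
  induction m with
  | zero => simp [aword]
  | succ k ih =>
    simp only [aword, List.replicate_succ, List.flatten_cons, List.length_append] at ih ⊢
    rw [ih, length_ablock]; ring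

lemma aword_succ (σ m : ℕ) : aword σ (m + 1) = ablock σ ++ aword σ m := by
  simp [aword, List.replicate_succ]

lemma drop_aword (σ m q : ℕ) (h : q ≤ m) :
    (aword σ m).drop (q * σ) = aword σ (m - q) := by
  have h1 : aword σ m = aword σ q ++ aword σ (m - q) := by
    simp only [aword]
    rw [← List.flatten_append, ← List.replicate_add]
    have : q + (m - q) = m := by omega
    rw [this]
  rw [h1, List.drop_left' (by rw [length_aword])]

lemma count_window {σ : ℕ} (hσ : 0 < σ) (m s : ℕ) (hs : s + σ ≤ m * σ) (a : Fin σ) :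
    (((aword σ m).drop s).take σ).count a = 1 := by
  obtain ⟨q, r, hrlt, hsq⟩ : ∃ q r, r < σ ∧ s = q * σ + r :=
    ⟨s / σ, s % σ, Nat.mod_lt _ hσ, (Nat.div_add_mod' s σ).symm⟩
  have hqm : q < m := by
    by_contra hc
    push_neg at hc
    have : m * σ ≤ q * σ := Nat.mul_le_mul_right _ hc
    omega
  rw [hsq, ← List.drop_drop, drop_aword σ m q (le_of_lt hqm)]
  have hmq : m - q = (m - q - 1) + 1 := by omega
  rw [hmq, aword_succ, List.drop_append_of_le_length (by rw [length_ablock]; omega)]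
  have hlen : ((ablock σ).drop r).length = σ - r := by rw [List.length_drop, length_ablock]
  rw [List.take_append, hlen,
    List.take_of_length_le (by rw [hlen]; omega)]
  have hσr : σ - (σ - r) = r := by omega
  rw [hσr, List.count_append]
  rcases Nat.eq_zero_or_pos r with h0 | hpos
  · simp [h0, count_ablock]
  · have hmq2 : 1 ≤ m - q - 1 := by
      by_contra hc
      push_neg at hc
      have hmq1 : m = q + 1 := by omega
      subst hmq1
      have : (q + 1) * σ = q * σ + σ := by ring
      omega
    have hmq3 : m - q - 1 = (m - q - 2) + 1 := by omega
    rw [hmq3, aword_succ, List.take_append_of_le_length (by rw [length_ablock]; omega)]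
    have := count_ablock (σ := σ) a
    rw [← List.take_append_drop r (ablock σ), List.count_append] at this
    omega

lemma count_chunks {σ : ℕ} (hσ : 0 < σ) (m : ℕ) :
    ∀ q s, s + q * σ ≤ m * σ → ∀ a : Fin σ,
    (((aword σ m).drop s).take (q * σ)).count a = q := by
  intro q
  induction q with
  | zero => intro s _ a; simp
  | succ k ih =>
    intro s hs a
    have h1 : (k + 1) * σ = σ + k * σ := by ring
    rw [h1, List.take_add, List.count_append, List.drop_drop,
      count_window hσ m s (by omega) a, ih (s + σ) (by omega) a]
    omega

lemma count_take_of_dvd {σ : ℕ} (hσ : 0 < σ) (m s p : ℕ) (hdvd : σ ∣ p)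
    (hs : s + p ≤ m * σ) (a : Fin σ) :
    (((aword σ m).drop s).take p).count a = p / σ := by
  obtain ⟨q, rfl⟩ := hdvd
  have hs' : s + q * σ ≤ m * σ := by rwa [mul_comm σ q] at hs
  rw [mul_comm σ q, Nat.mul_div_cancel _ hσ]
  exact count_chunks hσ m q s hs' a

lemma flatten_chunks {α : Type*} (w : List α) (p : ℕ) :
    ∀ k s, (List.ofFn (fun i : Fin k => (w.drop (s + i * p)).take p)).flatten
      = (w.drop s).take (k * p) := by
  intro k
  induction k with
  | zero => intro s; simp
  | succ k ih =>
    intro s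
    rw [List.ofFn_succ, List.flatten_cons]
    have harg : (fun i : Fin k => (w.drop (s + ((i.succ : Fin (k+1)) : ℕ) * p)).take p)
        = fun i : Fin k => (w.drop ((s + p) + (i : ℕ) * p)).take p := by
      funext i
      congr 2
      simp [Fin.val_succ]
      ring
    simp only [harg, ih (s + p)]
    have h1 : (k + 1) * p = p + k * p := by ring
    rw [h1, List.take_add, List.drop_drop]
    simp


theorem part1 (σ m n : ℕ) (hσ : 0 < σ) (hn : n = m * σ) :
    ∀ p, p % σ = 0 → 0 < p → p ≤ n → ∀ h, h ≤ min (p - 1) (n - p) →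
      HasAbelianPeriod (aword σ m) h p := by
  intro p hpmod hp0 hpn h hh
  have hdvd : σ ∣ p := Nat.dvd_of_mod_eq_zero hpmod
  have hlenw : (aword σ m).length = n := by rw [length_aword, hn]
  have hh1 : h ≤ p - 1 := le_trans hh (min_le_left _ _)
  have hh2 : h ≤ n - p := le_trans hh (min_le_right _ _)
  have hhp : h < p := by omega
  have hhn : h + p ≤ n := by omega
  obtain ⟨k, t, hk1, ht, hsum⟩ : ∃ k t, 1 ≤ k ∧ t < p ∧ h + k * p + t = n := by
    refine ⟨(n - h) / p, (n - h) % p, (Nat.one_le_div_iff hp0).mpr (by omega),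
      Nat.mod_lt _ hp0, ?_⟩
    rw [add_assoc, Nat.div_add_mod']
    omega
  set w := aword σ m with hw
  have hip : ∀ i : Fin k, h + (i : ℕ) * p + p ≤ n := by
    intro i
    have h2 : ((i : ℕ) + 1) * p ≤ k * p := Nat.mul_le_mul_right _ i.isLt
    calc h + (i : ℕ) * p + p = h + ((i : ℕ) + 1) * p := by ring
      _ ≤ h + k * p := Nat.add_le_add_left h2 h
      _ ≤ n := Nat.le.intro hsum
  have hcnt : ∀ u ∈ (List.ofFn fun i : Fin k => List.take p (List.drop (h + (i : ℕ) * p) w)),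
      ∀ a : Fin σ, u.count a = p / σ := by
    intro u hu a
    rw [List.mem_ofFn] at hu
    obtain ⟨i, rfl⟩ := hu
    exact count_take_of_dvd hσ m _ p hdvd (by rw [← hn]; exact hip i) a
  refine ⟨hhp, w.take h,
    List.ofFn (fun i : Fin k => (w.drop (h + (i : ℕ) * p)).take p),
    w.drop (h + k * p), ?_, ?_, ?_, ?_, ?_, ?_, ?_, ?_⟩
  · rw [flatten_chunks w p k h, ← List.drop_drop, List.append_assoc,
      List.take_append_drop, List.take_append_drop]
  · rw [List.length_take, hlenw]
    omega
  · intro hc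
    have := congrArg List.length hc
    simp only [List.length_ofFn, List.length_nil] at this
    omega
  · intro u hu
    rw [List.mem_ofFn] at hu
    obtain ⟨i, rfl⟩ := hu
    rw [List.length_take, List.length_drop, hlenw]
    exact min_eq_left (Nat.le_sub_of_add_le (by rw [add_comm]; exact hip i))
  · intro u hu v hv a
    rw [hcnt u hu a, hcnt v hv a]
  · intro u hu a
    rw [hcnt u hu a]
    have e1 : List.take h w = List.take h (List.take p w) := by
      rw [List.take_take, min_eq_left (le_of_lt hhp)]
    rw [e1]
    refine le_trans ((List.take_sublist h (List.take p w)).count_le a) ?_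
    have e2 : List.take p w = (w.drop 0).take p := by rw [List.drop_zero]
    rw [e2, count_take_of_dvd hσ m 0 p hdvd (by rw [← hn]; omega) a]
  · intro u hu a
    rw [hcnt u hu a]
    have h1 : n - p ≤ h + k * p := by
      calc n - p ≤ n - t := by omega
        _ = h + k * p := by rw [← hsum]; exact Nat.add_sub_cancel _ _
    have e2 : List.drop (h + k * p) w = (w.drop (n - p)).drop ((h + k * p) - (n - p)) := by
      rw [List.drop_drop]
      congr 1
      exact (Nat.add_sub_cancel' h1).symm
    rw [e2]
    refine le_trans ((List.drop_sublist _ _).count_le a) ?_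
    have hlen2 : (w.drop (n - p)).length = p := by rw [List.length_drop, hlenw]; omega
    have e3 : w.drop (n - p) = (w.drop (n - p)).take p := (List.take_of_length_le hlen2.le).symm
    rw [e3, count_take_of_dvd hσ m (n - p) p hdvd (by rw [← hn]; omega) a]
  · rw [List.length_drop, hlenw, ← hsum, Nat.add_sub_cancel_left]
    exact ht

theorem part2 (σ m n : ℕ) (hσ : 0 < σ) (hn : n = m * σ) :
    (n - 2 * σ) ^ 2 ≤ 8 * σ *
      {hp : ℕ × ℕ | HasAbelianPeriod (aword σ m) hp.1 hp.2}.ncard := by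
  classical
  set S := {hp : ℕ × ℕ | HasAbelianPeriod (aword σ m) hp.1 hp.2} with hS
  have hbound : ∀ hp ∈ S, hp.1 ≤ n ∧ hp.2 ≤ n := by
    rintro ⟨h, p⟩ hhp
    obtain ⟨hlt, u0, us, uk, heq, -, hne, hlen, -⟩ := hhp
    simp only at hlt hlen
    obtain ⟨u, hu⟩ := List.exists_mem_of_ne_nil us hne
    have h2 : u.length ≤ us.flatten.length := (List.sublist_flatten_of_mem hu).length_le
    have h3 : (aword σ m).length = n := by rw [length_aword, hn]
    rw [heq] at h3
    simp only [List.length_append] at h3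
    have h1 : p ≤ n := by rw [← hlen u hu]; omega
    exact ⟨by omega, h1⟩
  have hfin : S.Finite := by
    refine Set.Finite.subset (Set.finite_Icc (0, 0) ((n, n) : ℕ × ℕ)) ?_
    rintro ⟨h, p⟩ hhp
    obtain ⟨h1, h2⟩ := hbound _ hhp
    rw [Set.mem_Icc]
    exact ⟨⟨Nat.zero_le _, Nat.zero_le _⟩, ⟨h1, h2⟩⟩
  have hmemS : ∀ P x, P % σ = 0 → 0 < P → 2 * P ≤ n → x < P → (x, P) ∈ S := by
    intro P x h1 h2 h3 h4
    exact part1 σ m n hσ hn P h1 h2 (by omega) x (le_min (by omega) (by omega))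
  set t := m / 2 with htdef
  set T : Finset (ℕ × ℕ) := (Finset.Icc 1 t).biUnion
      (fun j => (Finset.range (j * σ)).image (fun x => (x, j * σ))) with hT
  have hTsub : ↑T ⊆ S := by
    intro hp hmem
    rw [Finset.mem_coe, hT, Finset.mem_biUnion] at hmem
    obtain ⟨j, hj, hx⟩ := hmem
    rw [Finset.mem_image] at hx
    obtain ⟨x, hxr, rfl⟩ := hx
    rw [Finset.mem_range] at hxr
    rw [Finset.mem_Icc] at hj
    have h2p : 2 * (j * σ) ≤ n := by
      rw [hn]
      calc 2 * (j * σ) = (2 * j) * σ := by ring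
        _ ≤ m * σ := Nat.mul_le_mul_right σ (by omega)
    exact hmemS (j * σ) x (Nat.mul_mod_left j σ) (Nat.mul_pos (by omega) hσ) h2p hxr
  have hcard : T.card = (∑ j ∈ Finset.Icc 1 t, j) * σ := by
    rw [hT, Finset.card_biUnion ?_]
    · rw [Finset.sum_mul]
      refine Finset.sum_congr rfl fun j hj => ?_
      rw [Finset.card_image_of_injective _
        (fun a b hab => by simpa using congrArg Prod.fst hab), Finset.card_range]
    · intro a ha b hb hab
      refine Finset.disjoint_left.mpr ?_
      rintro ⟨x, y⟩ h1 h2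
      simp only [Finset.mem_image, Finset.mem_range] at h1 h2
      obtain ⟨x1, -, he1⟩ := h1
      obtain ⟨x2, -, he2⟩ := h2
      apply hab
      have e1 := congrArg Prod.snd he1
      have e2 := congrArg Prod.snd he2
      simp only at e1 e2
      exact Nat.eq_of_mul_eq_mul_right hσ (e1.trans e2.symm)
  have hrange : Finset.range (t + 1) = insert 0 (Finset.Icc 1 t) := by
    ext x; simp [Finset.mem_range, Finset.mem_Icc]; omega
  have hg : (∑ j ∈ Finset.Icc 1 t, j) * 2 = t * (t + 1) := by
    have hh := Finset.sum_range_id_mul_two (t + 1)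
    rw [hrange, Finset.sum_insert (by simp), zero_add, Nat.add_sub_cancel] at hh
    exact hh.trans (mul_comm _ _)
  have h1 : T.card ≤ S.ncard := by
    rw [← Set.ncard_coe_finset]
    exact Set.ncard_le_ncard hTsub hfin
  have hm2 : m - 2 ≤ 2 * t := by omega
  have key : (m - 2) ^ 2 ≤ 4 * (t * (t + 1)) :=
    calc (m - 2) ^ 2 ≤ (2 * t) ^ 2 := Nat.pow_le_pow_left hm2 2
      _ = 4 * (t * t) := by ring
      _ ≤ 4 * (t * (t + 1)) := by gcongr; omega
  calc (n - 2 * σ) ^ 2 = ((m - 2) * σ) ^ 2 := by rw [hn, Nat.sub_mul]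
    _ = (m - 2) ^ 2 * σ ^ 2 := by ring
    _ ≤ (4 * (t * (t + 1))) * σ ^ 2 := by gcongr
    _ = 4 * ((∑ j ∈ Finset.Icc 1 t, j) * 2) * σ ^ 2 := by rw [hg]
    _ = 8 * σ * ((∑ j ∈ Finset.Icc 1 t, j) * σ) := by ring
    _ = 8 * σ * T.card := by rw [hcard]
    _ ≤ 8 * σ * S.ncard := by gcongr

end AbPer

/-- For every `n = m·σ` divisible by `σ`, the word
`w = (a₁a₂⋯a_σ)^{n/σ}` over the alphabet `Fin σ` has Abelian period `(h, p)` for every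
`p ≡ 0 (mod σ)` with `0 < p ≤ n` and every `h` with `0 ≤ h ≤ min (p-1) (n-p)`.
Consequently `w` has `Θ(n²)` distinct Abelian periods: the number of its Abelian
periods is at least `(n - 2σ)² / (8σ)`. -/
theorem abelian_periods_of_power_word (σ m n : ℕ) (hσ : 0 < σ) (hn : n = m * σ) :
    (∀ p, p % σ = 0 → 0 < p → p ≤ n → ∀ h, h ≤ min (p - 1) (n - p) →
      HasAbelianPeriod
        ((List.replicate m (List.ofFn (fun i : Fin σ => i))).flatten) h p) ∧
    (n - 2 * σ) ^ 2 ≤ 8 * σ *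
      {hp : ℕ × ℕ | HasAbelianPeriod
        ((List.replicate m (List.ofFn (fun i : Fin σ => i))).flatten) hp.1 hp.2}.ncard := by
  have hw : (List.replicate m (List.ofFn (fun i : Fin σ => i))).flatten = AbPer.aword σ m := rfl
  rw [hw]
  exact ⟨AbPer.part1 σ m n hσ hn, AbPer.part2 σ m n hσ hn⟩
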